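/- Let T be a measure-preserving automorphism of a probability space and let a, b : Ω → ℝ be measurable with log|a| integrable, ∫ log|a| dμ < 0, and log⁺|b| integrable. Then for μ-a.e. ω, the series X(ω) = ∑_{n=0}^∞ a(T⁻¹ω)a(T⁻²ω)···a(T⁻ⁿω) b(T⁻ⁿ⁻¹ω) converges absolutely. -/

import Mathlib

set_option linter.unusedSectionVars false
set_option linter.unusedVariables false
set_option linter.unnecessarySimpa false
set_option linter.unnecessarySeqFocus false

open MeasureTheory Filter Set Function Topology

namespace SeriesAE

variable {Ω : Type*} [MeasurableSpace Ω] {μ : Measure Ω} {S : Ω → Ω} {g : Ω → ℝ}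

/-- Running maximum of Birkhoff sums: `mx S g N ω = max_{0 ≤ n ≤ N} birkhoffSum S g n ω`. -/
noncomputable def mx (S : Ω → Ω) (g : Ω → ℝ) : ℕ → Ω → ℝ
  | 0 => fun _ => 0
  | (N+1) => fun ω => max (mx S g N ω) (birkhoffSum S g (N+1) ω)

lemma mx_nonneg (N : ℕ) (ω : Ω) : 0 ≤ mx S g N ω := by
  induction N with
  | zero => simp [mx]
  | succ N ih => exact le_trans ih (le_max_left _ _)

lemma mx_mono (ω : Ω) : Monotone fun N => mx S g N ω :=
  monotone_nat_of_le_succ fun N => le_max_left _ _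

lemma birkhoffSum_le_mx {n N : ℕ} (h : n ≤ N) (ω : Ω) :
    birkhoffSum S g n ω ≤ mx S g N ω := by
  induction N with
  | zero => interval_cases n <;> simp [mx]
  | succ N ih =>
    rcases Nat.lt_or_ge n (N+1) with h' | h'
    · exact le_trans (ih (Nat.lt_succ_iff.mp h')) (le_max_left _ _)
    · have : n = N + 1 := le_antisymm h h'
      subst this; exact le_max_right _ _

lemma mx_key {N : ℕ} {ω : Ω} (h : 0 < mx S g N ω) :
    mx S g N ω ≤ g ω + mx S g N (S ω) := by
  induction N with
  | zero => simp [mx] at h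
  | succ N ih =>
    simp only [mx] at h ⊢
    rcases max_cases (mx S g N ω) (birkhoffSum S g (N+1) ω) with ⟨he, _⟩ | ⟨he, _⟩ <;>
      rw [he] at h ⊢
    · exact le_trans (ih h) (by gcongr; exact le_max_left _ _)
    · rw [birkhoffSum_succ']
      gcongr
      exact le_trans (birkhoffSum_le_mx le_rfl (S ω)) (le_max_left _ _)

lemma mx_measurable (hSmeas : Measurable S) (hg : Measurable g) (N : ℕ) :
    Measurable (mx S g N) := by
  induction N with
  | zero => simpa [mx] using measurable_const
  | succ N ih =>
    exact ih.max (Finset.measurable_sum _ fun i _ => hg.comp (hSmeas.iterate i))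

lemma birkhoffSum_integrable (hS : MeasurePreserving S μ μ) (hgi : Integrable g μ) (n : ℕ) :
    Integrable (birkhoffSum S g n) μ := by
  apply integrable_finset_sum
  intro i _
  exact ((hS.iterate i).integrable_comp hgi.aestronglyMeasurable).mpr hgi

lemma mx_integrable (hS : MeasurePreserving S μ μ) (hgi : Integrable g μ) (N : ℕ) :
    Integrable (mx S g N) μ := by
  induction N with
  | zero => simpa [mx] using integrable_const (0:ℝ)
  | succ N ih => exact ih.sup (birkhoffSum_integrable hS hgi (N+1))

end SeriesAE

namespace SeriesAE

variable {Ω : Type*} [MeasurableSpace Ω] {μ : Measure Ω}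

lemma mx_pos {S : Ω → Ω} {g : Ω → ℝ} {N : ℕ} {ω : Ω} (h : 0 < mx S g N ω) :
    ∃ n, 0 < birkhoffSum S g (n+1) ω := by
  induction N with
  | zero => simp [mx] at h
  | succ N ih =>
    simp only [mx] at h
    rcases lt_max_iff.mp h with h' | h'
    · exact ih h'
    · exact ⟨N, h'⟩

lemma exists_pos_meas {S : Ω → Ω} {g : Ω → ℝ} (hS : MeasurePreserving S μ μ)
    (hSmeas : Measurable S) (hg : Measurable g) (hgi : Integrable g μ)
    [IsProbabilityMeasure μ] (hneg : ∫ ω, g ω ∂μ < 0) :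
    μ {ω | ∀ n, birkhoffSum S g (n+1) ω ≤ 0} ≠ 0 := by
  intro h0
  set E : Set Ω := {ω | ∀ n, birkhoffSum S g (n+1) ω ≤ 0} with hE
  have hEmeas : MeasurableSet E := by
    have : E = ⋂ n : ℕ, {ω | birkhoffSum S g (n+1) ω ≤ 0} := by
      ext ω; simp [hE, Set.mem_iInter]
    rw [this]
    exact MeasurableSet.iInter fun n =>
      measurableSet_le (Finset.measurable_sum _ fun i _ => hg.comp (hSmeas.iterate i))
        measurable_const
  set A : ℕ → Set Ω := fun N => {ω | 0 < mx S g N ω} with hA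
  have hAmeas : ∀ N, MeasurableSet (A N) :=
    fun N => measurableSet_lt measurable_const (mx_measurable hSmeas hg N)
  have hAmono : Monotone A := fun M N hMN ω hω => lt_of_lt_of_le hω (mx_mono ω hMN)
  -- each set integral is nonneg
  have key : ∀ N, 0 ≤ ∫ ω in A N, g ω ∂μ := by
    intro N
    have hmxi : Integrable (mx S g N) μ := mx_integrable hS hgi N
    have hmxSi : Integrable (fun ω => mx S g N (S ω)) μ :=
      (hS.integrable_comp hmxi.aestronglyMeasurable).mpr hmxi
    have hdiffi : Integrable (fun ω => mx S g N ω - mx S g N (S ω)) μ := hmxi.sub hmxSi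
    have h1 : ∫ ω in A N, (mx S g N ω - mx S g N (S ω)) ∂μ ≤ ∫ ω in A N, g ω ∂μ := by
      apply setIntegral_mono_on hdiffi.integrableOn hgi.integrableOn (hAmeas N)
      intro ω hω
      have := mx_key (S := S) (g := g) hω
      linarith
    have h2 : ∫ ω in (A N)ᶜ, (mx S g N ω - mx S g N (S ω)) ∂μ ≤ 0 := by
      apply setIntegral_nonpos (hAmeas N).compl
      intro ω hω
      have h3 : mx S g N ω ≤ 0 := le_of_not_gt hω
      have := mx_nonneg (S := S) (g := g) N (S ω)
      linarith
    have h4 : ∫ ω, (mx S g N ω - mx S g N (S ω)) ∂μ = 0 := by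
      rw [integral_sub hmxi hmxSi]
      have : ∫ ω, mx S g N (S ω) ∂μ = ∫ ω, mx S g N ω ∂μ := by
        rw [← integral_map hSmeas.aemeasurable
          (by rw [hS.map_eq]; exact hmxi.aestronglyMeasurable : AEStronglyMeasurable (mx S g N) (μ.map S)), hS.map_eq]
      rw [this, sub_self]
    have h5 := integral_add_compl (hAmeas N) hdiffi
    linarith
  -- the union of the A N is Eᶜ
  have hUnion : (⋃ N, A N) = Eᶜ := by
    ext ω
    simp only [Set.mem_iUnion, Set.mem_compl_iff, hA, hE, Set.mem_setOf_eq, not_forall, not_le]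
    constructor
    · rintro ⟨N, hN⟩; exact mx_pos hN
    · rintro ⟨n, hn⟩
      exact ⟨n+1, lt_of_lt_of_le hn (birkhoffSum_le_mx le_rfl ω)⟩
  have htend := tendsto_setIntegral_of_monotone hAmeas hAmono
    (hgi.integrableOn : IntegrableOn g (⋃ N, A N) μ)
  have hlim : ∫ ω in (⋃ N, A N), g ω ∂μ = ∫ ω, g ω ∂μ := by
    rw [hUnion]
    have h6 := integral_add_compl hEmeas.compl hgi
    have h7 : ∫ ω in Eᶜᶜ, g ω ∂μ = 0 := by
      rw [compl_compl]
      have : μ.restrict E = 0 := Measure.restrict_eq_zero.mpr h0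
      rw [this]
      simp
    linarith
  have : 0 ≤ ∫ ω, g ω ∂μ := by
    rw [← hlim]
    exact ge_of_tendsto' htend key
  linarith

end SeriesAE

namespace SeriesAE

variable {Ω : Type*} [MeasurableSpace Ω] {μ : Measure Ω} [IsProbabilityMeasure μ]
variable {T S : Ω → Ω}

lemma hit (hT : MeasurePreserving T μ μ) (hErg : Ergodic T μ)
    (hSmeas : Measurable S) (hS : MeasurePreserving S μ μ)
    (hST : Function.LeftInverse S T)
    {E : Set Ω} (hEmeas : MeasurableSet E) (hμE : μ E ≠ 0) :
    ∀ᵐ ω ∂μ, ∃ m, S^[m] ω ∈ E := by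
  set U : Set Ω := ⋃ n, S^[n] ⁻¹' E with hU
  have hUmeas : MeasurableSet U :=
    MeasurableSet.iUnion fun n => (hSmeas.iterate n) hEmeas
  have hsub : S ⁻¹' U ⊆ U := by
    rintro ω hω
    obtain ⟨t, ⟨n, rfl⟩, hn⟩ := hω
    exact Set.mem_iUnion.mpr ⟨n+1, by simpa [Function.iterate_succ_apply] using hn⟩
  have hmeq : μ U ≤ μ (S ⁻¹' U) := by
    rw [hS.measure_preimage hUmeas.nullMeasurableSet]
  have haeeq : S ⁻¹' U =ᵐ[μ] U :=
    ae_eq_of_subset_of_measure_ge hsub hmeq (hSmeas hUmeas).nullMeasurableSet (measure_ne_top μ U)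
  have hTae : T ⁻¹' U =ᵐ[μ] U := by
    have h1 := hT.quasiMeasurePreserving.preimage_ae_eq haeeq
    have hid : T ⁻¹' (S ⁻¹' U) = U := by
      ext ω; simp [hST ω]
    rw [hid] at h1
    exact h1.symm
  rcases hErg.quasiErgodic.ae_empty_or_univ₀ hUmeas.nullMeasurableSet hTae with h | h
  · exfalso
    apply hμE
    have hEU : E ⊆ U := by
      intro ω hω
      exact Set.mem_iUnion.mpr ⟨0, by simpa using hω⟩
    have : μ U = 0 := ae_eq_empty.mp h
    exact le_antisymm (le_trans (measure_mono hEU) this.le) zero_le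
  · have hcompl : μ Uᶜ = 0 := ae_eq_univ.mp h
    have : ∀ᵐ ω ∂μ, ω ∈ U := by
      rw [MeasureTheory.ae_iff]
      exact hcompl
    filter_upwards [this] with ω hω
    exact Set.mem_iUnion.mp hω

lemma sums_bounded (hT : MeasurePreserving T μ μ) (hErg : Ergodic T μ)
    (hSmeas : Measurable S) (hS : MeasurePreserving S μ μ)
    (hST : Function.LeftInverse S T)
    {g : Ω → ℝ} (hg : Measurable g) (hgi : Integrable g μ)
    (hneg : ∫ ω, g ω ∂μ < 0) :
    ∀ᵐ ω ∂μ, ∃ C, ∀ n, birkhoffSum S g n ω ≤ C := by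
  set E : Set Ω := {ω | ∀ n, birkhoffSum S g (n+1) ω ≤ 0} with hE
  have hEmeas : MeasurableSet E := by
    have : E = ⋂ n : ℕ, {ω | birkhoffSum S g (n+1) ω ≤ 0} := by
      ext ω; simp [hE, Set.mem_iInter]
    rw [this]
    exact MeasurableSet.iInter fun n =>
      measurableSet_le (Finset.measurable_sum _ fun i _ => hg.comp (hSmeas.iterate i))
        measurable_const
  have hμE : μ E ≠ 0 := exists_pos_meas hS hSmeas hg hgi hneg
  filter_upwards [hit hT hErg hSmeas hS hST hEmeas hμE] with ω hω
  obtain ⟨m, hm⟩ := hω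
  refine ⟨mx S g m ω, fun n => ?_⟩
  rcases le_or_gt n m with h | h
  · exact birkhoffSum_le_mx h ω
  · have hn : n = m + (n - m - 1 + 1) := by omega
    rw [hn, birkhoffSum_add]
    have h1 := hm (n - m - 1)
    have h2 := birkhoffSum_le_mx (S := S) (g := g) (le_refl m) ω
    linarith

lemma linear_bound (hT : MeasurePreserving T μ μ) (hErg : Ergodic T μ)
    (hSmeas : Measurable S) (hS : MeasurePreserving S μ μ)
    (hST : Function.LeftInverse S T)
    {h : Ω → ℝ} (hh : Measurable h) (hh0 : ∀ ω, 0 ≤ h ω) (hhi : Integrable h μ)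
    {ε : ℝ} (hε : 0 < ε) :
    ∀ᵐ ω ∂μ, ∃ C, ∀ n : ℕ, h (S^[n] ω) ≤ C + ε * n := by
  -- choose K with ∫ max (h - K) 0 < ε
  have hFi : ∀ K : ℕ, Integrable (fun ω => max (h ω - K) 0) μ := fun K =>
    (hhi.sub (integrable_const _)).sup (integrable_const 0)
  have htend : Tendsto (fun K : ℕ => ∫ ω, max (h ω - K) 0 ∂μ) atTop (𝓝 0) := by
    have hb : ∀ K : ℕ, ∀ᵐ ω ∂μ, ‖max (h ω - K) 0‖ ≤ h ω := by
      intro K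
      filter_upwards with ω
      rw [Real.norm_eq_abs, abs_of_nonneg (le_max_right _ _)]
      exact max_le (by have : (0:ℝ) ≤ (K:ℝ) := Nat.cast_nonneg K; linarith [hh0 ω]) (hh0 ω)
    have hl : ∀ᵐ ω ∂μ, Tendsto (fun K : ℕ => max (h ω - K) 0) atTop (𝓝 ((fun _ => (0:ℝ)) ω)) := by
      filter_upwards with ω
      apply Filter.Tendsto.congr' (f₁ := fun _ : ℕ => (0:ℝ))
      · filter_upwards [Filter.eventually_ge_atTop ⌈h ω⌉₊] with K hK
        have : h ω - K ≤ 0 := by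
          have : h ω ≤ (K : ℝ) := le_trans (Nat.le_ceil _) (by exact_mod_cast hK)
          linarith
        simp [max_eq_right this]
      · exact tendsto_const_nhds
    have := tendsto_integral_of_dominated_convergence (F := fun (K : ℕ) ω => max (h ω - K) 0)
      h (fun K => (hFi K).aestronglyMeasurable) hhi hb hl
    simpa using this
  obtain ⟨K, hK⟩ := (htend.eventually (eventually_lt_nhds hε)).exists
  set g : Ω → ℝ := fun ω => max (h ω - K) 0 - ε with hgdef
  have hgmeas : Measurable g := ((hh.sub measurable_const).max measurable_const).sub
    measurable_const
  have hgi : Integrable g μ := (hFi K).sub (integrable_const _)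
  have hgneg : ∫ ω, g ω ∂μ < 0 := by
    rw [hgdef]
    simp only
    rw [integral_sub (hFi K) (integrable_const _), integral_const]
    simp only [measure_univ, probReal_univ, ENNReal.toReal_one, one_smul, smul_eq_mul]
    linarith
  filter_upwards [sums_bounded hT hErg hSmeas hS hST hgmeas hgi hgneg] with ω hω
  obtain ⟨C, hC⟩ := hω
  refine ⟨K + C + ε, fun n => ?_⟩
  have h1 := hC (n+1)
  rw [birkhoffSum_succ] at h1
  have h2 : -(ε * n) ≤ birkhoffSum S g n ω := by
    have : ∀ i ∈ Finset.range n, -ε ≤ g (S^[i] ω) := by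
      intro i _
      have := le_max_right (h (S^[i] ω) - K) 0
      simp only [hgdef]
      linarith
    calc -(ε * n) = ∑ _i ∈ Finset.range n, (-ε) := by
          simp [Finset.sum_const, Finset.card_range]; ring
      _ ≤ birkhoffSum S g n ω := Finset.sum_le_sum this
  have h3 : h (S^[n] ω) - K - ε ≤ g (S^[n] ω) := by
    simp only [hgdef]
    have := le_max_left (h (S^[n] ω) - K) 0
    linarith
  linarith

end SeriesAE

open MeasureTheory Filter

/-- Let `T` be an ergodic measure-preserving automorphism (with inverse `S`) of a
probability space and `a, b` measurable functions with `log |a|` integrable of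
negative mean and `log⁺ |b|` integrable. Then for a.e. `ω` the series
`∑ₙ a(T⁻¹ω)⋯a(T⁻ⁿω) b(T⁻ⁿ⁻¹ω)` converges absolutely. -/
theorem series_converges_ae {Ω : Type*} [MeasurableSpace Ω]
    (μ : Measure Ω) [IsProbabilityMeasure μ] (T S : Ω → Ω)
    (hT : MeasurePreserving T μ μ) (hErg : Ergodic T μ)
    (hSmeas : Measurable S)
    (hST : Function.LeftInverse S T) (hTS : Function.RightInverse S T)
    (a b : Ω → ℝ) (hma : Measurable a) (hmb : Measurable b)
    (ha0 : ∀ ω, a ω ≠ 0)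
    (hla : Integrable (fun ω => Real.log |a ω|) μ)
    (hneg : ∫ ω, Real.log |a ω| ∂μ < 0)
    (hlb : Integrable (fun ω => max (Real.log |b ω|) 0) μ) :
    ∀ᵐ ω ∂μ, Summable
      (fun n : ℕ => |(∏ i ∈ Finset.range n, a (S^[i + 1] ω)) * b (S^[n + 1] ω)|) := by
  have hS : MeasurePreserving S μ μ := by
    refine ⟨hSmeas, ?_⟩
    conv_lhs => rw [← hT.map_eq]
    rw [Measure.map_map hSmeas hT.measurable]
    have : S ∘ T = id := funext hST
    rw [this, Measure.map_id]
  set c : ℝ := (∫ ω, Real.log |a ω| ∂μ) / 2 with hc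
  have hcneg : c < 0 := by rw [hc]; linarith
  set g₁ : Ω → ℝ := fun ω => Real.log |a ω| - c with hg₁def
  have hg₁meas : Measurable g₁ := (Real.measurable_log.comp hma.abs).sub measurable_const
  have hg₁i : Integrable g₁ μ := hla.sub (integrable_const c)
  have hg₁neg : ∫ ω, g₁ ω ∂μ < 0 := by
    rw [hg₁def]
    simp only
    rw [integral_sub hla (integrable_const c), integral_const]
    simp only [measure_univ, probReal_univ, ENNReal.toReal_one, one_smul, smul_eq_mul]
    rw [hc]; linarith
  have hbmeas : Measurable (fun ω => max (Real.log |b ω|) 0) :=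
    (Real.measurable_log.comp hmb.abs).max measurable_const
  have hb0 : ∀ ω, 0 ≤ max (Real.log |b ω|) 0 := fun ω => le_max_right _ _
  have hεpos : (0:ℝ) < -c/2 := by linarith
  have A1 := SeriesAE.sums_bounded hT hErg hSmeas hS hST hg₁meas hg₁i hg₁neg
  have A2 := SeriesAE.linear_bound hT hErg hSmeas hS hST hbmeas hb0 hlb hεpos
  have htrans := hS.quasiMeasurePreserving.tendsto_ae.eventually (A1.and A2)
  filter_upwards [htrans] with ω hω
  obtain ⟨⟨C₁, hC₁⟩, ⟨C₂, hC₂⟩⟩ := hω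
  have hgeom : Summable (fun n : ℕ => Real.exp (C₁ + C₂) * Real.exp (c/2) ^ n) :=
    (summable_geometric_of_lt_one (Real.exp_nonneg _)
      (by rw [Real.exp_lt_one_iff]; linarith)).mul_left _
  apply Summable.of_nonneg_of_le (fun n => abs_nonneg _) ?_ hgeom
  intro n
  have hprod : ∏ i ∈ Finset.range n, |a (S^[i+1] ω)|
      = Real.exp (birkhoffSum S g₁ n (S ω) + c * n) := by
    calc ∏ i ∈ Finset.range n, |a (S^[i+1] ω)|
        = ∏ i ∈ Finset.range n, Real.exp (Real.log |a (S^[i+1] ω)|) :=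
          Finset.prod_congr rfl fun i _ => (Real.exp_log (abs_pos.mpr (ha0 _))).symm
      _ = Real.exp (∑ i ∈ Finset.range n, Real.log |a (S^[i+1] ω)|) :=
          (Real.exp_sum _ _).symm
      _ = Real.exp (birkhoffSum S g₁ n (S ω) + c * n) := by
          congr 1
          rw [birkhoffSum]
          have hk : ∀ k, g₁ (S^[k] (S ω)) = Real.log |a (S^[k+1] ω)| - c := by
            intro k
            rw [← Function.iterate_succ_apply]
          rw [Finset.sum_congr rfl (fun k _ => hk k), Finset.sum_sub_distrib,
            Finset.sum_const, Finset.card_range, nsmul_eq_mul]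
          ring
  have hbbd : |b (S^[n+1] ω)| ≤ Real.exp (C₂ + (-c/2) * n) := by
    have h1 : |b (S^[n+1] ω)| ≤ Real.exp (max (Real.log |b (S^[n+1] ω)|) 0) := by
      rcases eq_or_ne (b (S^[n+1] ω)) 0 with h | h
      · rw [h]; simp [Real.exp_pos _ |>.le]
      · calc |b (S^[n+1] ω)| = Real.exp (Real.log |b (S^[n+1] ω)|) :=
              (Real.exp_log (abs_pos.mpr h)).symm
          _ ≤ _ := Real.exp_le_exp.mpr (le_max_left _ _)
    refine le_trans h1 (Real.exp_le_exp.mpr ?_)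
    have := hC₂ n
    rwa [← Function.iterate_succ_apply S n ω] at this
  calc |(∏ i ∈ Finset.range n, a (S^[i + 1] ω)) * b (S^[n + 1] ω)|
      = (∏ i ∈ Finset.range n, |a (S^[i+1] ω)|) * |b (S^[n+1] ω)| := by
        rw [abs_mul, Finset.abs_prod]
    _ ≤ Real.exp (C₁ + c * n) * Real.exp (C₂ + (-c/2) * n) := by
        apply mul_le_mul _ hbbd (abs_nonneg _) (Real.exp_nonneg _)
        rw [hprod]
        exact Real.exp_le_exp.mpr (by linarith [hC₁ n])
    _ = Real.exp (C₁ + C₂) * Real.exp (c/2) ^ n := by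
        rw [← Real.exp_nat_mul, ← Real.exp_add, ← Real.exp_add]
        congr 1
        ring
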